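/- For every nonempty finite set X, every integer k ≥ 1, every k-clustering C of X all of whose clusters are nonempty, and every integer d ≥ 1, there exists a mapping g : X → ℝ^d such that COST_X(g, C) = 0 and every k-clustering C' of X with COST_X(g, C') = 0 satisfies Δ_X(C, C') = 0; in particular, C is, up to a permutation of the cluster indices, the unique minimizer of the k-means cost of X under g. -/

import Mathlib

open scoped BigOperators symmDiff

noncomputable section

/-- Euclidean space `ℝ^n`. -/
abbrev Euc (n : ℕ) : Type := EuclideanSpace ℝ (Fin n)

variable {X : Type*} [Fintype X] [DecidableEq X] {n k : ℕ}

/-- `C` is a `k`-clustering of `X`: an ordered tuple of pairwise disjoint subsets covering `X`. -/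
def IsClustering (k : ℕ) (C : Fin k → Finset X) : Prop :=
  (∀ i j, i ≠ j → Disjoint (C i) (C j)) ∧ Finset.univ.biUnion C = Finset.univ

/-- Sample-based clustering difference `Δ_S`. -/
def clusterDiffOn (k : ℕ) (S : Finset X) (C₁ C₂ : Fin k → Finset X) : ℝ :=
  ⨅ σ : Equiv.Perm (Fin k),
    (1 / (S.card : ℝ)) * ∑ i, (((C₁ i ∩ S) ∆ (C₂ (σ i) ∩ S)).card : ℝ)

/-- Clustering difference `Δ_X`. -/
def clusterDiff (k : ℕ) (C₁ C₂ : Fin k → Finset X) : ℝ :=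
  clusterDiffOn k Finset.univ C₁ C₂

/-- k-means cost of `X` under mapping `f` with a `k`-tuple of centers `μ`. -/
def costCenters (k : ℕ) (f : X → Euc n) (μ : Fin k → Euc n) : ℝ :=
  (1 / (Fintype.card X : ℝ)) * ∑ x, ⨅ j : Fin k, ‖f x - μ j‖ ^ 2

/-- k-means cost of a clustering `C` under `f`, with per-cluster optimal centers. -/
def costClustering (k : ℕ) (f : X → Euc n) (C : Fin k → Finset X) : ℝ :=
  (1 / (Fintype.card X : ℝ)) * ∑ i, ⨅ μ : Euc n, ∑ x ∈ C i, ‖f x - μ‖ ^ 2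

/-- Index of a nearest center to `f x`, ties broken by smallest index. -/
def nearestIdx [NeZero k] (f : X → Euc n) (μ : Fin k → Euc n) (x : X) : Fin k :=
  (Finset.univ.filter fun j => ∀ l, ‖f x - μ j‖ ≤ ‖f x - μ l‖).min' (by
    have hk : 0 < k := Nat.pos_of_ne_zero (NeZero.ne k)
    obtain ⟨j, -, hj⟩ := Finset.exists_min_image (Finset.univ : Finset (Fin k))
      (fun j => ‖f x - μ j‖) ⟨⟨0, hk⟩, Finset.mem_univ _⟩
    exact ⟨j, Finset.mem_filter.mpr ⟨Finset.mem_univ _, fun l => hj l (Finset.mem_univ _)⟩⟩)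

/-- The Voronoi `k`-clustering of `X` induced by `(f, μ)`, ties broken by smallest index. -/
def voronoiClustering [NeZero k] (f : X → Euc n) (μ : Fin k → Euc n) : Fin k → Finset X :=
  fun i => Finset.univ.filter fun x => nearestIdx f μ x = i

/-- `f` has a unique optimal k-means clustering `Cf`: minimizers of the center-based cost
exist and all of them induce the same Voronoi clustering, namely `Cf`. -/
def HasUniqueOptClustering [NeZero k] (f : X → Euc n) (Cf : Fin k → Finset X) : Prop :=
  (∃ μ : Fin k → Euc n, ∀ ν, costCenters k f μ ≤ costCenters k f ν) ∧
  ∀ μ : Fin k → Euc n, (∀ ν, costCenters k f μ ≤ costCenters k f ν) →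
    voronoiClustering f μ = Cf

/-- `f` has an `(η, ε)`-unique k-means solution on `X`, with optimal clustering `Cf`. -/
def HasUniqueSolution [NeZero k] (f : X → Euc n) (Cf : Fin k → Finset X) (η ε : ℝ) : Prop :=
  HasUniqueOptClustering f Cf ∧
  ∀ P : Fin k → Finset X, IsClustering k P →
    costClustering k f P < costClustering k f Cf + η → clusterDiff k Cf P < ε

/-- `L₁` distance `d_{L1}^X` between two functions on `X`. -/
def dL1 {E : Type*} [SeminormedAddGroup E] (f g : X → E) : ℝ :=
  (1 / (Fintype.card X : ℝ)) * ∑ x, ‖f x - g x‖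

/-- The indicator function `h_σ^{f₁,f₂}` of `∪_i (C¹_i Δ C²_{σ(i)})`. -/
def indSymmDiff (C₁ C₂ : Fin k → Finset X) (σ : Equiv.Perm (Fin k)) : X → ℝ :=
  fun x => if x ∈ Finset.univ.biUnion (fun i => C₁ i ∆ C₂ (σ i)) then 1 else 0

/-- The class `H^F`, where `Cf f` is the optimal clustering of `f`. -/
def HF (F : Set (X → Euc n)) (Cf : (X → Euc n) → Fin k → Finset X) : Set (X → ℝ) :=
  {h | ∃ f₁ ∈ F, ∃ f₂ ∈ F, ∃ σ : Equiv.Perm (Fin k), h = indSymmDiff (Cf f₁) (Cf f₂) σ}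

/-- Internal covering number `N(G, d, r)`. -/
def coveringNumber {α : Type*} (G : Set α) (d : α → α → ℝ) (r : ℝ) : ℕ :=
  sInf {m : ℕ | ∃ T : Finset α, ↑T ⊆ G ∧ T.card = m ∧ ∀ g ∈ G, ∃ t ∈ T, d g t ≤ r}

/-- External covering number `N_ext(G, d, r)`. -/
def extCoveringNumber {α : Type*} (G : Set α) (d : α → α → ℝ) (r : ℝ) : ℕ :=
  sInf {m : ℕ | ∃ T : Finset α, T.card = m ∧ ∀ g ∈ G, ∃ t ∈ T, d g t ≤ r}

/-- `G` pseudo-shatters the finite set `S`. -/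
def PseudoShatters (G : Set (X → ℝ)) (S : Finset X) : Prop :=
  ∃ r : X → ℝ, ∀ b : X → Bool, ∃ g ∈ G, ∀ x ∈ S, (r x < g x ↔ b x = true)

/-- Pseudo-dimension of a class of real-valued functions. -/
def pdim (G : Set (X → ℝ)) : ℕ :=
  sSup {m : ℕ | ∃ S : Finset X, S.card = m ∧ PseudoShatters G S}

/-- The class of `i`-th coordinate functions of members of `F`. -/
def coordClass (F : Set (X → Euc n)) (i : Fin n) : Set (X → ℝ) :=
  {g | ∃ f ∈ F, g = fun x => f x i}

/-- Vector-valued pseudo-dimension `Pdim(F) = n · max_i Pdim(F_i)`. -/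
def vPdim (n : ℕ) (F : Set (X → Euc n)) : ℕ :=
  n * Finset.univ.sup fun i : Fin n => pdim (coordClass F i)

/-- k-richness. For every nonempty finite `X`, `k ≥ 1`, k-clustering `C` of `X`
with nonempty clusters, and `d ≥ 1`, there is `g : X → ℝ^d` with `COST_X(g, C) = 0`, and every
k-clustering `C'` with `COST_X(g, C') = 0` satisfies `Δ_X(C, C') = 0`. -/
theorem richness_of_kmeans (X : Type*) [Fintype X] [DecidableEq X] [Nonempty X]
    (k : ℕ) (hk : 1 ≤ k) (C : Fin k → Finset X) (hC : IsClustering k C)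
    (hCne : ∀ i, (C i).Nonempty) (d : ℕ) (hd : 1 ≤ d) :
    ∃ g : X → Euc d,
      costClustering k g C = 0 ∧
      ∀ C' : Fin k → Finset X, IsClustering k C' → costClustering k g C' = 0 →
        clusterDiff k C C' = 0 := by
  classical
  have hmem : ∀ x : X, ∃ i, x ∈ C i := by
    intro x
    have hx : x ∈ Finset.univ.biUnion C := by rw [hC.2]; exact Finset.mem_univ x
    obtain ⟨i, -, hi⟩ := Finset.mem_biUnion.mp hx
    exact ⟨i, hi⟩
  set idx : X → Fin k := fun x => (hmem x).choose with hidxdef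
  have hidxmem : ∀ x, x ∈ C (idx x) := fun x => (hmem x).choose_spec
  have hidxuniq : ∀ x i, x ∈ C i → idx x = i := by
    intro x i hxi
    by_contra h
    exact Finset.disjoint_left.mp (hC.1 _ _ h) (hidxmem x) hxi
  set g : X → Euc d := fun x => WithLp.toLp 2 (fun _ : Fin d => ((idx x : ℕ) : ℝ)) with hgdef
  have hg : ∀ x y : X, g x = g y → idx x = idx y := by
    intro x y h
    have h0 := congrArg (fun v : Euc d => v ⟨0, hd⟩) h
    simp only [hgdef, PiLp.toLp_apply] at h0
    exact Fin.ext (Nat.cast_injective h0)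
  have hgne : ∀ x y : X, idx x ≠ idx y → g x ≠ g y := fun x y h hgxy => h (hg x y hgxy)
  refine ⟨g, ?_, ?_⟩
  · -- costClustering k g C = 0
    unfold costClustering
    have : ∀ i ∈ (Finset.univ : Finset (Fin k)),
        (⨅ μ : Euc d, ∑ x ∈ C i, ‖g x - μ‖ ^ 2) = 0 := by
      intro i _
      have hbdd : BddBelow (Set.range fun μ : Euc d => ∑ x ∈ C i, ‖g x - μ‖ ^ 2) := by
        refine ⟨0, ?_⟩
        rintro y ⟨μ, rfl⟩
        positivity
      apply le_antisymm
      · set μ0 : Euc d := WithLp.toLp 2 (fun _ : Fin d => ((i : ℕ) : ℝ)) with hμ0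
        have hval : ∑ x ∈ C i, ‖g x - μ0‖ ^ 2 = 0 := by
          apply Finset.sum_eq_zero
          intro x hx
          have hix : idx x = i := hidxuniq x i hx
          have : g x = μ0 := by
            ext j; simp [hgdef, hμ0, hix]
          rw [this, sub_self, norm_zero]
          ring
        calc (⨅ μ : Euc d, ∑ x ∈ C i, ‖g x - μ‖ ^ 2)
            ≤ ∑ x ∈ C i, ‖g x - μ0‖ ^ 2 :=
              ciInf_le hbdd _
          _ = 0 := hval
      · apply le_ciInf
        intro μ
        positivity
    rw [Finset.sum_congr rfl this]
    simp
  · -- uniqueness up to permutation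
    intro C' hC' hcost
    have hmem' : ∀ x : X, ∃ i, x ∈ C' i := by
      intro x
      have hx : x ∈ Finset.univ.biUnion C' := by rw [hC'.2]; exact Finset.mem_univ x
      obtain ⟨i, -, hi⟩ := Finset.mem_biUnion.mp hx
      exact ⟨i, hi⟩
    have hcardX : (0 : ℝ) < (Fintype.card X : ℝ) := by
      exact_mod_cast Fintype.card_pos
    -- each infimum in the cost of C' is zero
    have hinf0 : ∀ i : Fin k, (⨅ μ : Euc d, ∑ x ∈ C' i, ‖g x - μ‖ ^ 2) = 0 := by
      have hnn : ∀ i ∈ (Finset.univ : Finset (Fin k)),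
          0 ≤ ⨅ μ : Euc d, ∑ x ∈ C' i, ‖g x - μ‖ ^ 2 := by
        intro i _
        apply le_ciInf
        intro μ
        positivity
      have hsum0 : ∑ i, (⨅ μ : Euc d, ∑ x ∈ C' i, ‖g x - μ‖ ^ 2) = 0 := by
        unfold costClustering at hcost
        have h1 : (1 / (Fintype.card X : ℝ)) ≠ 0 := by positivity
        exact (mul_eq_zero.mp hcost).resolve_left h1
      intro i
      exact (Finset.sum_eq_zero_iff_of_nonneg hnn).mp hsum0 i (Finset.mem_univ i)
    -- idx is constant on each cluster of C'
    have hconst : ∀ i : Fin k, ∀ a ∈ C' i, ∀ b ∈ C' i, idx a = idx b := by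
      intro i a ha b hb
      by_contra hne
      have hgab : g a ≠ g b := hgne a b hne
      have hab : a ≠ b := fun h => hgab (by rw [h])
      have hpos : 0 < ‖g a - g b‖ ^ 2 / 2 := by
        have : g a - g b ≠ 0 := sub_ne_zero.mpr hgab
        have : 0 < ‖g a - g b‖ := norm_pos_iff.mpr this
        positivity
      have hlb : ‖g a - g b‖ ^ 2 / 2 ≤ ⨅ μ : Euc d, ∑ x ∈ C' i, ‖g x - μ‖ ^ 2 := by
        apply le_ciInf
        intro μ
        have htri : ‖g a - g b‖ ≤ ‖g a - μ‖ + ‖g b - μ‖ := by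
          rw [← sub_sub_sub_cancel_right (g a) (g b) μ]
          exact norm_sub_le _ _
        have hsq : ‖g a - g b‖ ^ 2 ≤ 2 * (‖g a - μ‖ ^ 2 + ‖g b - μ‖ ^ 2) := by
          nlinarith [htri, sq_nonneg (‖g a - μ‖ - ‖g b - μ‖), norm_nonneg (g a - g b),
            norm_nonneg (g a - μ), norm_nonneg (g b - μ)]
        have hpair : ‖g a - μ‖ ^ 2 + ‖g b - μ‖ ^ 2 ≤ ∑ x ∈ C' i, ‖g x - μ‖ ^ 2 := by
          have hsp : ∑ x ∈ ({a, b} : Finset X), ‖g x - μ‖ ^ 2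
              = ‖g a - μ‖ ^ 2 + ‖g b - μ‖ ^ 2 := Finset.sum_pair hab
          rw [← hsp]
          apply Finset.sum_le_sum_of_subset_of_nonneg
          · intro x hx
            rcases Finset.mem_insert.mp hx with h | h
            · rwa [h]
            · rw [Finset.mem_singleton.mp h]; exact hb
          · intro x _ _
            positivity
        linarith
      rw [hinf0 i] at hlb
      linarith
    -- the permutation
    set τ : Fin k → Fin k := fun i =>
      if h : (C' i).Nonempty then idx h.choose else i with hτdef
    have hτval : ∀ i : Fin k, ∀ x ∈ C' i, τ i = idx x := by
      intro i x hx
      have hne : (C' i).Nonempty := ⟨x, hx⟩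
      simp only [hτdef, dif_pos hne]
      exact hconst i hne.choose hne.choose_spec x hx
    have hτsurj : Function.Surjective τ := by
      intro j
      obtain ⟨x, hx⟩ := hCne j
      obtain ⟨i, hi⟩ := hmem' x
      refine ⟨i, ?_⟩
      rw [hτval i x hi]
      exact hidxuniq x j hx
    have hτbij : Function.Bijective τ := Finite.surjective_iff_bijective.mp hτsurj
    have hCeq : ∀ i, C' i = C (τ i) := by
      intro i
      apply Finset.ext
      intro x
      constructor
      · intro hx
        rw [hτval i x hx]
        exact hidxmem x
      · intro hx
        obtain ⟨i', hi'⟩ := hmem' x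
        have h1 : τ i' = idx x := hτval i' x hi'
        have h2 : idx x = τ i := hidxuniq x (τ i) hx
        have : i' = i := hτbij.1 (by rw [h1, h2])
        rwa [← this]
    set σ : Equiv.Perm (Fin k) := Equiv.ofBijective τ hτbij with hσdef
    -- compute clusterDiff
    unfold clusterDiff clusterDiffOn
    have hbddp : BddBelow (Set.range fun σ' : Equiv.Perm (Fin k) =>
        (1 / ((Finset.univ : Finset X).card : ℝ)) *
          ∑ i, (((C i ∩ Finset.univ) ∆ (C' (σ' i) ∩ Finset.univ)).card : ℝ)) := by
      refine ⟨0, ?_⟩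
      rintro y ⟨σ', rfl⟩
      exact mul_nonneg (div_nonneg zero_le_one (Nat.cast_nonneg _)) (Finset.sum_nonneg fun i _ => Nat.cast_nonneg _)
    apply le_antisymm
    · have hterm : (1 / ((Finset.univ : Finset X).card : ℝ)) *
          ∑ i, (((C i ∩ Finset.univ) ∆ (C' (σ.symm i) ∩ Finset.univ)).card : ℝ) = 0 := by
        have : ∀ i ∈ (Finset.univ : Finset (Fin k)),
            (((C i ∩ Finset.univ) ∆ (C' (σ.symm i) ∩ Finset.univ)).card : ℝ) = 0 := by
          intro i _
          have h1 : C' (σ.symm i) = C (τ (σ.symm i)) := hCeq _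
          have h2 : τ (σ.symm i) = i := σ.apply_symm_apply i
          rw [h1, h2]
          simp [symmDiff_self]
        rw [Finset.sum_congr rfl this]
        simp
      calc (⨅ σ' : Equiv.Perm (Fin k), (1 / ((Finset.univ : Finset X).card : ℝ)) *
              ∑ i, (((C i ∩ Finset.univ) ∆ (C' (σ' i) ∩ Finset.univ)).card : ℝ))
          ≤ (1 / ((Finset.univ : Finset X).card : ℝ)) *
              ∑ i, (((C i ∩ Finset.univ) ∆ (C' (σ.symm i) ∩ Finset.univ)).card : ℝ) :=
            ciInf_le hbddp _
        _ = 0 := hterm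
    · apply le_ciInf
      intro σ'
      exact mul_nonneg (div_nonneg zero_le_one (Nat.cast_nonneg _)) (Finset.sum_nonneg fun i _ => Nat.cast_nonneg _)
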